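/- For every l ≥ 4, there is no finite sequence of local complementations that transforms the cycle graph C_l into a star graph on its l vertices. -/

import Mathlib

/-- A finite simple graph with an explicit vertex set inside an ambient type `α`. -/
structure FGraph (α : Type*) where
  verts : Set α
  Adj : α → α → Prop
  symm : ∀ {a b}, Adj a b → Adj b a
  loopless : ∀ a, ¬ Adj a a
  edge_mem : ∀ {a b}, Adj a b → a ∈ verts ∧ b ∈ verts

namespace FGraph

variable {α : Type*}

/-- Local complementation at `v`: two distinct vertices are adjacent iff exactly one of
(adjacent in `G`) or (both neighbours of `v` in `G`) holds. -/
def LC (G : FGraph α) (v : α) : FGraph α where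
  verts := G.verts
  Adj a b := a ≠ b ∧ Xor' (G.Adj a b) (G.Adj v a ∧ G.Adj v b)
  symm := by
    rintro a b ⟨hne, h⟩
    refine ⟨hne.symm, ?_⟩
    rcases h with ⟨h1, h2⟩ | ⟨h1, h2⟩
    · exact Or.inl ⟨G.symm h1, fun hx => h2 ⟨hx.2, hx.1⟩⟩
    · exact Or.inr ⟨⟨h1.2, h1.1⟩, fun hx => h2 (G.symm hx)⟩
  loopless := fun a h => h.1 rfl
  edge_mem := by
    rintro a b ⟨hne, h⟩
    rcases h with ⟨h1, _⟩ | ⟨⟨ha, hb⟩, _⟩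
    · exact G.edge_mem h1
    · exact ⟨(G.edge_mem ha).2, (G.edge_mem hb).2⟩

/-- Z measurement at `v`: delete the vertex `v` together with all incident edges. -/
def ZM (G : FGraph α) (v : α) : FGraph α where
  verts := G.verts \ {v}
  Adj a b := G.Adj a b ∧ a ≠ v ∧ b ≠ v
  symm := fun h => ⟨G.symm h.1, h.2.2, h.2.1⟩
  loopless := fun a h => G.loopless a h.1
  edge_mem := by
    rintro a b ⟨h, ha, hb⟩
    exact ⟨⟨(G.edge_mem h).1, ha⟩, ⟨(G.edge_mem h).2, hb⟩⟩

/-- X measurement at `u` with chosen neighbour `w`: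
`X_u(G) = LC_w(Z_u(LC_u(LC_w(G))))`. -/
def XM (G : FGraph α) (u w : α) : FGraph α :=
  ((((G.LC w).LC u).ZM u).LC w)

/-- Y measurement at `v`: `Y_v(G) = Z_v(LC_v(G))`. -/
def YM (G : FGraph α) (v : α) : FGraph α :=
  (G.LC v).ZM v

/-- `G` is a star graph with centre `c`. -/
def IsStar (G : FGraph α) (c : α) : Prop :=
  c ∈ G.verts ∧
    ∀ a b, G.Adj a b ↔ (a ≠ b ∧ a ∈ G.verts ∧ b ∈ G.verts ∧ (a = c ∨ b = c))

/-- `G` is a complete graph on its vertex set. -/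
def IsComplete (G : FGraph α) : Prop :=
  ∀ a b, G.Adj a b ↔ (a ≠ b ∧ a ∈ G.verts ∧ b ∈ G.verts)

/-- One step of local complementation or vertex deletion. -/
inductive Step : FGraph α → FGraph α → Prop
  | lc (G : FGraph α) (v : α) : Step G (G.LC v)
  | del (G : FGraph α) (v : α) : Step G (G.ZM v)

/-- `H` is a vertex-minor of `G`: `H` is obtained from `G` by a finite sequence of
local complementations and vertex deletions. -/
def IsVertexMinor (H G : FGraph α) : Prop :=
  Relation.ReflTransGen Step G H

/-- One step of local complementation. -/
inductive LCStep : FGraph α → FGraph α → Prop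
  | lc (G : FGraph α) (v : α) : LCStep G (G.LC v)

/-- `H` is obtained from `G` by a finite sequence of local complementations. -/
def LCReach (G H : FGraph α) : Prop :=
  Relation.ReflTransGen LCStep G H

end FGraph

/-- The cycle graph on vertices `0, 1, …, l-1`, with `i` adjacent to `j`
iff `i - j ≡ ±1 (mod l)`. -/
def cycleGraph (l : ℕ) : FGraph ℕ where
  verts := {i | i < l}
  Adj a b := a < l ∧ b < l ∧ a ≠ b ∧ ((a + 1) % l = b ∨ (b + 1) % l = a)
  symm := fun h => ⟨h.2.1, h.1, h.2.2.1.symm, h.2.2.2.symm⟩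
  loopless := fun a h => h.2.2.1 rfl
  edge_mem := fun h => ⟨h.1, h.2.1⟩

/-- The 2×2 cross "determinant" over GF(2) between rows `{a,b}` and columns `{x,y}`. -/
def Det (G : FGraph ℕ) (a b x y : ℕ) : Prop :=
  Xor' (G.Adj a x ∧ G.Adj b y) (G.Adj a y ∧ G.Adj b x)

/-- The invariant: some pair of rows has cut-rank 2. -/
def CutInv (G : FGraph ℕ) : Prop :=
  ∃ a b x y, x ≠ a ∧ x ≠ b ∧ y ≠ a ∧ y ≠ b ∧ Det G a b x y

lemma LC_adj (G : FGraph ℕ) (v a b : ℕ) :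
    (G.LC v).Adj a b ↔ (a ≠ b ∧ Xor' (G.Adj a b) (G.Adj v a ∧ G.Adj v b)) := Iff.rfl

set_option maxHeartbeats 2000000 in
lemma cutinv_lc (G : FGraph ℕ) (v : ℕ) (h : CutInv G) : CutInv (G.LC v) := by
  classical
  obtain ⟨a, b, x, y, hxa, hxb, hya, hyb, hd⟩ := h
  simp only [Det, Xor'] at hd
  by_cases hva : v = a
  · subst hva
    refine ⟨v, b, x, y, hxa, hxb, hya, hyb, ?_⟩
    have hvv := G.loopless v
    simp only [Det, LC_adj, Xor']
    by_cases pax : G.Adj v x <;> by_cases pay : G.Adj v y <;>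
      by_cases pbx : G.Adj b x <;> by_cases pby : G.Adj b y <;>
      by_cases pvb : G.Adj v b <;> simp_all [Xor', Xor] <;> omega
  by_cases hvb : v = b
  · subst hvb
    refine ⟨a, v, x, y, hxa, hxb, hya, hyb, ?_⟩
    have hvv := G.loopless v
    simp only [Det, LC_adj, Xor']
    by_cases pax : G.Adj a x <;> by_cases pay : G.Adj a y <;>
      by_cases pbx : G.Adj v x <;> by_cases pby : G.Adj v y <;>
      by_cases pva : G.Adj v a <;> simp_all [Xor', Xor] <;> omega
  by_cases hvx : v = x
  · subst hvx
    refine ⟨a, b, v, y, hxa, hxb, hya, hyb, ?_⟩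
    have hvv := G.loopless v
    have h1 : G.Adj v a ↔ G.Adj a v := ⟨G.symm, G.symm⟩
    have h2 : G.Adj v b ↔ G.Adj b v := ⟨G.symm, G.symm⟩
    have hax : a ≠ v := fun h => hxa h.symm
    have hbx : b ≠ v := fun h => hxb h.symm
    have hay : a ≠ y := fun h => hya h.symm
    have hby : b ≠ y := fun h => hyb h.symm
    simp only [Det, LC_adj, Xor']
    by_cases pax : G.Adj a v <;> by_cases pay : G.Adj a y <;>
      by_cases pbx : G.Adj b v <;> by_cases pby : G.Adj b y <;>
      by_cases pvy : G.Adj v y <;> simp_all [Xor'] <;> omega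
  by_cases hvy : v = y
  · subst hvy
    refine ⟨a, b, x, v, hxa, hxb, hya, hyb, ?_⟩
    have hvv := G.loopless v
    have h1 : G.Adj v a ↔ G.Adj a v := ⟨G.symm, G.symm⟩
    have h2 : G.Adj v b ↔ G.Adj b v := ⟨G.symm, G.symm⟩
    have hax : a ≠ x := fun h => hxa h.symm
    have hbx : b ≠ x := fun h => hxb h.symm
    have hay : a ≠ v := fun h => hya h.symm
    have hby : b ≠ v := fun h => hyb h.symm
    simp only [Det, LC_adj, Xor']
    by_cases pax : G.Adj a x <;> by_cases pay : G.Adj a v <;>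
      by_cases pbx : G.Adj b x <;> by_cases pby : G.Adj b v <;>
      by_cases pvx : G.Adj v x <;> simp_all [Xor'] <;> omega
  · -- v is none of a, b, x, y
    have hva' : v ≠ a := hva
    have hvb' : v ≠ b := hvb
    have key : Det (G.LC v) a b x y ∨ Det (G.LC v) a b x v ∨ Det (G.LC v) a b v y := by
      have hvv := G.loopless v
      have h1 : G.Adj v a ↔ G.Adj a v := ⟨G.symm, G.symm⟩
      have h2 : G.Adj v b ↔ G.Adj b v := ⟨G.symm, G.symm⟩
      have hax : a ≠ x := fun h => hxa h.symm
      have hbx : b ≠ x := fun h => hxb h.symm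
      have hay : a ≠ y := fun h => hya h.symm
      have hby : b ≠ y := fun h => hyb h.symm
      have hav : a ≠ v := fun h => hva h.symm
      have hbv : b ≠ v := fun h => hvb h.symm
      simp only [Det, LC_adj, Xor']
      by_cases pax : G.Adj a x <;> by_cases pay : G.Adj a y <;>
        by_cases pbx : G.Adj b x <;> by_cases pby : G.Adj b y <;>
        by_cases pav : G.Adj v a <;> by_cases pbv : G.Adj v b <;>
        by_cases pvx : G.Adj v x <;> by_cases pvy : G.Adj v y <;>
        simp_all [Xor'] <;> omega
    rcases key with h | h | h
    · exact ⟨a, b, x, y, hxa, hxb, hya, hyb, h⟩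
    · exact ⟨a, b, x, v, hxa, hxb, hva', hvb', h⟩
    · exact ⟨a, b, v, y, hva', hvb', hya, hyb, h⟩

lemma not_star_of_cutinv (H : FGraph ℕ) (hI : CutInv H) (c : ℕ) : ¬ H.IsStar c := by
  rintro ⟨hc, hadj⟩
  obtain ⟨a, b, x, y, hxa, hxb, hya, hyb, hd⟩ := hI
  simp only [Det, Xor', hadj] at hd
  rcases hd with ⟨⟨⟨_, ha, hx, h1⟩, ⟨_, hb, hy, h2⟩⟩, hn⟩ |
    ⟨⟨⟨_, ha, hy, h1⟩, ⟨_, hb, hx, h2⟩⟩, hn⟩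
  · exact hn ⟨⟨by omega, ha, hy, by omega⟩, ⟨by omega, hb, hx, by omega⟩⟩
  · exact hn ⟨⟨by omega, ha, hx, by omega⟩, ⟨by omega, hb, hy, by omega⟩⟩

lemma cutinv_cycle (l : ℕ) (hl : 4 ≤ l) : CutInv (cycleGraph l) := by
  refine ⟨0, 1, l - 1, 2, by omega, by omega, by omega, by omega, Or.inl ⟨⟨?_, ?_⟩, ?_⟩⟩
  · refine ⟨by omega, by omega, by omega, Or.inr ?_⟩
    rw [Nat.sub_add_cancel (by omega), Nat.mod_self]
  · exact ⟨by omega, by omega, by omega, Or.inl (Nat.mod_eq_of_lt (by omega))⟩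
  · rintro ⟨⟨_, _, _, h | h⟩, _⟩
    · rw [Nat.mod_eq_of_lt (by omega)] at h; omega
    · rw [Nat.mod_eq_of_lt (by omega)] at h; omega

/-- for `l ≥ 4`, no finite sequence of local complementations
transforms the cycle `C_l` into a star graph. -/
theorem cycle_not_lcReach_star (l : ℕ) (hl : 4 ≤ l) :
    ∀ H, FGraph.LCReach (cycleGraph l) H → ∀ c, ¬ H.IsStar c := by
  intro H hreach c
  have hInv : CutInv H := by
    induction hreach with
    | refl => exact cutinv_cycle l hl
    | tail _ hs ih =>
      cases hs with
      | lc v => exact cutinv_lc _ v ih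
  exact not_star_of_cutinv H hInv c
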